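/- Let $r \geq t \geq 3$, let $K = K_{n_1,\ldots,n_r}$ with $n_1 \geq \cdots \geq n_r$, and suppose $\mathcal{P} = (P_1,\ldots,P_{t-1})$ is a partition of $V(K)$ into $t-1$ parts achieving the maximum of $e(K[\mathcal{P}])$, where $K[\mathcal{P}]$ is the spanning subgraph of $K$ retaining only edges between different $P_j$'s. Then $\mathcal{P}$ is 1-partial to $\mathcal{V} = (V_1,\ldots,V_r)$, that is, each part $P_j$ contains vertices from at most one class $V_i$ that is not entirely contained in $P_j$. -/

import Mathlib

open Finset

/-- The subgraph `K[𝒫]` of `K_{n₁,…,n_r}` keeping only edges between different classes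
`V_i` and different parts `P_j` of the vertex partition `P`. -/
def multipartitePartGraph {r s : ℕ} (n : Fin r → ℕ)
    (P : (Σ i : Fin r, Fin (n i)) → Fin s) : SimpleGraph (Σ i : Fin r, Fin (n i)) where
  Adj u v := u.1 ≠ v.1 ∧ P u ≠ P v
  symm := ⟨fun _ _ h => ⟨h.1.symm, h.2.symm⟩⟩
  loopless := ⟨fun _ h => h.1 rfl⟩

/-- `e(K[𝒫])`, the number of edges of `K_{n₁,…,n_r}[𝒫]`. -/
noncomputable def partVal {r s : ℕ} (n : Fin r → ℕ)
    (P : (Σ i : Fin r, Fin (n i)) → Fin s) : ℕ :=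
  (multipartitePartGraph n P).edgeSet.ncard

/-- The class `V_i` is partial in the part `P_j`:
`V_i ∩ P_j ≠ ∅` and `V_i ⊄ P_j`. -/
def PartialIn {r s : ℕ} {n : Fin r → ℕ} (P : (Σ i : Fin r, Fin (n i)) → Fin s)
    (i : Fin r) (j : Fin s) : Prop :=
  (∃ v : Σ i : Fin r, Fin (n i), v.1 = i ∧ P v = j) ∧
  (∃ v : Σ i : Fin r, Fin (n i), v.1 = i ∧ P v ≠ j)

section Aux

variable {r s : ℕ} {n : Fin r → ℕ}

/-- Number of ordered adjacent pairs. -/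
def Epairs (n : Fin r → ℕ) (P : (Σ i : Fin r, Fin (n i)) → Fin s) : ℕ :=
  (univ.filter fun p : (Σ i : Fin r, Fin (n i)) × (Σ i : Fin r, Fin (n i)) =>
    p.1.1 ≠ p.2.1 ∧ P p.1 ≠ P p.2).card

/-- Ordered adjacent pairs avoiding the vertex `x`. -/
def E0 (n : Fin r → ℕ) (P : (Σ i : Fin r, Fin (n i)) → Fin s) (x : Σ i : Fin r, Fin (n i)) : ℕ :=
  (univ.filter fun p : (Σ i : Fin r, Fin (n i)) × (Σ i : Fin r, Fin (n i)) =>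
    p.1 ≠ x ∧ p.2 ≠ x ∧ p.1.1 ≠ p.2.1 ∧ P p.1 ≠ P p.2).card

/-- Vertices outside class `i` and outside part `j`. -/
def Fcnt (n : Fin r → ℕ) (P : (Σ i : Fin r, Fin (n i)) → Fin s) (i : Fin r) (j : Fin s) : ℕ :=
  (univ.filter fun v : Σ i : Fin r, Fin (n i) => v.1 ≠ i ∧ P v ≠ j).card

lemma Epairs_eq (P : (Σ i : Fin r, Fin (n i)) → Fin s) :
    Epairs n P = 2 * partVal n P := by
  classical
  have hpv : partVal n P = (multipartitePartGraph n P).edgeFinset.card := by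
    rw [partVal, ← Set.ncard_coe_finset, SimpleGraph.coe_edgeFinset]
  rw [hpv, SimpleGraph.two_mul_card_edgeFinset, Epairs]
  congr 1
  apply Finset.filter_congr
  intro p _
  cases p
  rfl

lemma decomp (P : (Σ i : Fin r, Fin (n i)) → Fin s) (x : Σ i : Fin r, Fin (n i)) :
    Epairs n P = E0 n P x + 2 * Fcnt n P x.1 (P x) := by
  classical
  have hsplit := Finset.card_filter_add_card_filter_not
    (s := (univ : Finset ((Σ i : Fin r, Fin (n i)) × (Σ i : Fin r, Fin (n i)))).filter
      fun p => p.1.1 ≠ p.2.1 ∧ P p.1 ≠ P p.2) (p := fun p => p.1 = x ∨ p.2 = x)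
  have hE0 : (((univ : Finset ((Σ i : Fin r, Fin (n i)) × (Σ i : Fin r, Fin (n i)))).filter
      fun p => p.1.1 ≠ p.2.1 ∧ P p.1 ≠ P p.2).filter
      fun p => ¬(p.1 = x ∨ p.2 = x)).card = E0 n P x := by
    rw [E0]
    congr 1
    ext p
    simp only [mem_filter, mem_univ, true_and]
    tauto
  have hdisj : Disjoint
      (((univ : Finset ((Σ i : Fin r, Fin (n i)) × (Σ i : Fin r, Fin (n i)))).filter
        fun p => p.1.1 ≠ p.2.1 ∧ P p.1 ≠ P p.2).filter fun p => p.1 = x)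
      (((univ : Finset ((Σ i : Fin r, Fin (n i)) × (Σ i : Fin r, Fin (n i)))).filter
        fun p => p.1.1 ≠ p.2.1 ∧ P p.1 ≠ P p.2).filter fun p => p.2 = x) := by
    rw [Finset.disjoint_left]
    rintro ⟨a, b⟩ h1 h2
    simp only [mem_filter, mem_univ, true_and] at h1 h2
    exact h1.1.1 (by rw [h1.2, h2.2])
  have hc1 : (((univ : Finset ((Σ i : Fin r, Fin (n i)) × (Σ i : Fin r, Fin (n i)))).filter
      fun p => p.1.1 ≠ p.2.1 ∧ P p.1 ≠ P p.2).filter fun p => p.1 = x).card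
      = Fcnt n P x.1 (P x) := by
    have hset : (((univ : Finset ((Σ i : Fin r, Fin (n i)) × (Σ i : Fin r, Fin (n i)))).filter
        fun p => p.1.1 ≠ p.2.1 ∧ P p.1 ≠ P p.2).filter fun p => p.1 = x)
        = {x} ×ˢ (univ.filter fun v => v.1 ≠ x.1 ∧ P v ≠ P x) := by
      ext p
      obtain ⟨a, b⟩ := p
      simp only [mem_filter, mem_univ, true_and, mem_product, mem_singleton]
      constructor
      · rintro ⟨⟨h1, h2⟩, h3⟩
        subst h3
        exact ⟨rfl, fun h => h1 h.symm, fun h => h2 h.symm⟩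
      · rintro ⟨h3, h1, h2⟩
        subst h3
        exact ⟨⟨fun h => h1 h.symm, fun h => h2 h.symm⟩, rfl⟩
    rw [hset, Finset.card_product, Finset.card_singleton, one_mul, Fcnt]
  have hc2 : (((univ : Finset ((Σ i : Fin r, Fin (n i)) × (Σ i : Fin r, Fin (n i)))).filter
      fun p => p.1.1 ≠ p.2.1 ∧ P p.1 ≠ P p.2).filter fun p => p.2 = x).card
      = Fcnt n P x.1 (P x) := by
    have hset : (((univ : Finset ((Σ i : Fin r, Fin (n i)) × (Σ i : Fin r, Fin (n i)))).filter
        fun p => p.1.1 ≠ p.2.1 ∧ P p.1 ≠ P p.2).filter fun p => p.2 = x)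
        = (univ.filter fun v => v.1 ≠ x.1 ∧ P v ≠ P x) ×ˢ {x} := by
      ext p
      obtain ⟨a, b⟩ := p
      simp only [mem_filter, mem_univ, true_and, mem_product, mem_singleton]
      constructor
      · rintro ⟨⟨h1, h2⟩, h3⟩
        subst h3
        exact ⟨⟨h1, h2⟩, rfl⟩
      · rintro ⟨⟨h1, h2⟩, h3⟩
        subst h3
        exact ⟨⟨h1, h2⟩, rfl⟩
    rw [hset, Finset.card_product, Finset.card_singleton, mul_one, Fcnt]
  have hor : (((univ : Finset ((Σ i : Fin r, Fin (n i)) × (Σ i : Fin r, Fin (n i)))).filter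
      fun p => p.1.1 ≠ p.2.1 ∧ P p.1 ≠ P p.2).filter fun p => p.1 = x ∨ p.2 = x).card
      = Fcnt n P x.1 (P x) + Fcnt n P x.1 (P x) := by
    rw [Finset.filter_or, Finset.card_union_of_disjoint hdisj, hc1, hc2]
  have hfinal : Epairs n P = (((univ : Finset ((Σ i : Fin r, Fin (n i)) ×
      (Σ i : Fin r, Fin (n i)))).filter
      fun p => p.1.1 ≠ p.2.1 ∧ P p.1 ≠ P p.2).filter fun p => p.1 = x ∨ p.2 = x).card
      + (((univ : Finset ((Σ i : Fin r, Fin (n i)) × (Σ i : Fin r, Fin (n i)))).filter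
      fun p => p.1.1 ≠ p.2.1 ∧ P p.1 ≠ P p.2).filter fun p => ¬(p.1 = x ∨ p.2 = x)).card := by
    rw [Epairs, ← hsplit]
  rw [hfinal, hor, hE0]
  ring

lemma E0_update (P : (Σ i : Fin r, Fin (n i)) → Fin s) (x : Σ i : Fin r, Fin (n i)) (j' : Fin s) :
    E0 n (Function.update P x j') x = E0 n P x := by
  classical
  unfold E0
  congr 1
  ext p
  simp only [mem_filter, mem_univ, true_and]
  constructor
  · rintro ⟨h1, h2, h3, h4⟩
    rw [Function.update_of_ne h1, Function.update_of_ne h2] at h4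
    exact ⟨h1, h2, h3, h4⟩
  · rintro ⟨h1, h2, h3, h4⟩
    rw [← Function.update_of_ne h1 j' P, ← Function.update_of_ne h2 j' P] at h4
    exact ⟨h1, h2, h3, h4⟩

lemma Fcnt_update (P : (Σ i : Fin r, Fin (n i)) → Fin s) (x : Σ i : Fin r, Fin (n i))
    (j' j : Fin s) : Fcnt n (Function.update P x j') x.1 j = Fcnt n P x.1 j := by
  classical
  unfold Fcnt
  congr 1
  ext v
  simp only [mem_filter, mem_univ, true_and]
  constructor
  · rintro ⟨h1, h2⟩
    have hvx : v ≠ x := fun h => h1 (by rw [h])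
    rw [Function.update_of_ne hvx] at h2
    exact ⟨h1, h2⟩
  · rintro ⟨h1, h2⟩
    have hvx : v ≠ x := fun h => h1 (by rw [h])
    rw [← Function.update_of_ne hvx j' P] at h2
    exact ⟨h1, h2⟩

lemma move (P : (Σ i : Fin r, Fin (n i)) → Fin s) (x : Σ i : Fin r, Fin (n i)) (j' : Fin s) :
    Epairs n (Function.update P x j') = E0 n P x + 2 * Fcnt n P x.1 j' := by
  classical
  rw [decomp (Function.update P x j') x, E0_update, Fcnt_update, Function.update_self]

lemma Fcnt_insert (P : (Σ i : Fin r, Fin (n i)) → Fin s) (x : Σ i : Fin r, Fin (n i))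
    (i' : Fin r) (j j₁ : Fin s) (hxi : x.1 ≠ i') (hPx : P x = j) (hj₁ : j₁ ≠ j) :
    Fcnt n (Function.update P x j₁) i' j = Fcnt n P i' j + 1 := by
  classical
  have hset : (univ.filter fun v : Σ i : Fin r, Fin (n i) =>
      v.1 ≠ i' ∧ Function.update P x j₁ v ≠ j)
      = insert x (univ.filter fun v => v.1 ≠ i' ∧ P v ≠ j) := by
    ext v
    by_cases hv : v = x
    · subst hv
      simp [Function.update_self, hxi, hj₁]
    · simp only [mem_filter, mem_univ, true_and, Finset.mem_insert, hv, false_or,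
        Function.update_of_ne hv]
  rw [Fcnt, hset, Finset.card_insert_of_notMem (by simp [hPx])]
  rfl

lemma Fcnt_le (P : (Σ i : Fin r, Fin (n i)) → Fin s) (x : Σ i : Fin r, Fin (n i))
    (i' : Fin r) (j j₂ j₁ : Fin s) (hPx : P x = j) (hj : j ≠ j₂) :
    Fcnt n (Function.update P x j₁) i' j₂ ≤ Fcnt n P i' j₂ := by
  classical
  apply Finset.card_le_card
  intro v hv
  simp only [mem_filter, mem_univ, true_and] at hv ⊢
  by_cases h : v = x
  · subst h
    exact ⟨hv.1, by rw [hPx]; exact hj⟩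
  · rw [Function.update_of_ne h] at hv
    exact hv

end Aux

/-- An extremal `(t-1)`-partition `𝒫` of `V(K_{n₁,…,n_r})` is 1-partial: each part
contains at most one partial class `V_i`. -/
theorem stmt6 (r t : ℕ) (ht : 3 ≤ t) (hr : t ≤ r) (n : Fin r → ℕ)
    (hpos : ∀ i, 0 < n i) (hmono : Antitone n)
    (P : (Σ i : Fin r, Fin (n i)) → Fin (t - 1))
    (hmax : ∀ Q : (Σ i : Fin r, Fin (n i)) → Fin (t - 1), partVal n Q ≤ partVal n P) :
    ∀ j : Fin (t - 1), ∀ i i' : Fin r,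
      PartialIn P i j → PartialIn P i' j → i = i' := by
  classical
  intro j i i' hi hi'
  by_contra hne
  obtain ⟨⟨x, hx1, hx2⟩, ⟨x₁, hx11, hx12⟩⟩ := hi
  obtain ⟨⟨y, hy1, hy2⟩, ⟨y₂, hy21, hy22⟩⟩ := hi'
  have hmaxE : ∀ Q : (Σ i : Fin r, Fin (n i)) → Fin (t - 1),
      Epairs n Q ≤ Epairs n P := by
    intro Q
    rw [Epairs_eq, Epairs_eq]
    exact Nat.mul_le_mul_left 2 (hmax Q)
  have key : ∀ (z : Σ i : Fin r, Fin (n i)) (j' : Fin (t - 1)),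
      Fcnt n P z.1 j' ≤ Fcnt n P z.1 (P z) := by
    intro z j'
    have h2 := hmaxE (Function.update P z j')
    rw [move P z j', decomp P z] at h2
    omega
  set j₁ := P x₁ with hj₁def
  set j₂ := P y₂ with hj₂def
  have e1 : Fcnt n P i j = Fcnt n P i j₁ := by
    have h1 := key x j₁
    have h2 := key x₁ j
    rw [hx1, hx2] at h1
    rw [hx11, ← hj₁def] at h2
    omega
  have e2 : Fcnt n P i' j = Fcnt n P i' j₂ := by
    have h1 := key y j₂
    have h2 := key y₂ j
    rw [hy1, hy2] at h1
    rw [hy21, ← hj₂def] at h2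
    omega
  set Q₁ := Function.update P x j₁ with hQ₁def
  have hEQ₁ : Epairs n Q₁ = Epairs n P := by
    rw [hQ₁def, move P x j₁, decomp P x, hx1, hx2, e1]
  have hyx : y₂ ≠ x := by
    intro h
    exact hne (by rw [← hx1, ← hy21, h])
  have hQ₁y₂ : Q₁ y₂ = j₂ := by
    rw [hQ₁def, Function.update_of_ne hyx, hj₂def]
  have hEQ₂ : Epairs n (Function.update Q₁ y₂ j) = E0 n Q₁ y₂ + 2 * Fcnt n Q₁ i' j := by
    rw [move Q₁ y₂ j, hy21]
  have hEQ₁' : Epairs n Q₁ = E0 n Q₁ y₂ + 2 * Fcnt n Q₁ i' j₂ := by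
    rw [decomp Q₁ y₂, hy21, hQ₁y₂]
  have hins : Fcnt n Q₁ i' j = Fcnt n P i' j + 1 := by
    apply Fcnt_insert P x i' j j₁ _ hx2 hx12
    rw [hx1]; exact hne
  have hle : Fcnt n Q₁ i' j₂ ≤ Fcnt n P i' j₂ := by
    apply Fcnt_le P x i' j j₂ j₁ hx2
    intro h
    exact hy22 h.symm
  have hcontra := hmaxE (Function.update Q₁ y₂ j)
  rw [hEQ₂] at hcontra
  rw [← hEQ₁, hEQ₁'] at hcontra
  omega
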